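/- Let f : ℝ^d → ℝ be twice continuously differentiable with ∇f(0) = 0 and Hessian H := ∇²f(0) positive-definite with smallest eigenvalue λ_min > 0. Then for every ε > 0 there is a neighborhood N of 0 such that 0 < f(x) − f(0) ≤ (1/(2λ_min) + ε)·‖∇f(x)‖² for all x ∈ N with x ≠ 0. -/

import Mathlib

set_option maxHeartbeats 1000000

open RealInnerProductSpace

/-- **Łojasiewicz-type inequality at a nondegenerate critical point** (Euclidean chart
version of Lemma 3.3). Let `f : ℝ^d → ℝ` be `C²` with `∇f(0) = 0` and Hessian
`H = D(∇f)(0)` positive-definite with smallest eigenvalue `≥ lammin > 0` (i.e.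
`⟪H v, v⟫ ≥ lammin ‖v‖²`). Then for every `ε > 0` there is a neighborhood `N` of `0`
such that `0 < f(x) - f(0) ≤ (1/(2 lammin) + ε) ‖∇f(x)‖²` for all `x ∈ N`, `x ≠ 0`. -/
theorem lojasiewicz_at_nondegenerate_critical_point
    {d : ℕ} (f : EuclideanSpace ℝ (Fin d) → ℝ)
    (hf : ContDiff ℝ 2 f) (hcrit : gradient f 0 = 0)
    (lammin : ℝ) (hlam : 0 < lammin)
    (hH : ∀ v : EuclideanSpace ℝ (Fin d),
      lammin * ‖v‖ ^ 2 ≤ ⟪fderiv ℝ (gradient f) 0 v, v⟫) :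
    ∀ ε > 0, ∃ N ∈ nhds (0 : EuclideanSpace ℝ (Fin d)),
      ∀ x ∈ N, x ≠ 0 →
        0 < f x - f 0 ∧ f x - f 0 ≤ (1 / (2 * lammin) + ε) * ‖gradient f x‖ ^ 2 := by
  intro ε hε
  let E := EuclideanSpace ℝ (Fin d)
  set g := gradient f with hgdef
  set H := fderiv ℝ g 0 with hHdef
  have hgC1 : ContDiff ℝ 1 g := by
    have : g = fun x => (InnerProductSpace.toDual ℝ E).symm (fderiv ℝ f x) := rfl
    rw [this]
    exact (InnerProductSpace.toDual ℝ E).symm.contDiff.comp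
      (hf.fderiv_right (by norm_num))
  have hgdiff : Differentiable ℝ g := hgC1.differentiable one_ne_zero
  have hfdiff : Differentiable ℝ f := hf.differentiable two_ne_zero
  have hinner : ∀ y v : E, fderiv ℝ f y v = ⟪g y, v⟫ := by
    intro y v
    have : g y = (InnerProductSpace.toDual ℝ E).symm (fderiv ℝ f y) := rfl
    rw [this, ← InnerProductSpace.toDual_apply_apply,
      (InnerProductSpace.toDual ℝ E).apply_symm_apply]
  -- λ‖v‖ ≤ ‖Hv‖
  have hHnorm : ∀ v : E, lammin * ‖v‖ ≤ ‖H v‖ := by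
    intro v
    rcases eq_or_ne v 0 with rfl | hv
    · simp
    · have h1 := hH v
      have h2 : ⟪H v, v⟫ ≤ ‖H v‖ * ‖v‖ := real_inner_le_norm _ _
      have hv' : 0 < ‖v‖ := norm_pos_iff.mpr hv
      nlinarith
  -- choose δ
  set c : ℝ → ℝ := fun δ =>
    (1 + δ / (lammin - δ)) ^ 2 / (2 * lammin) + δ / (lammin - δ) ^ 2 with hcdef
  have hcont : ContinuousAt c 0 := by
    have h1 : ContinuousAt (fun δ : ℝ => lammin - δ) 0 := by fun_prop
    have hne : lammin - (0:ℝ) ≠ 0 := by simpa using hlam.ne'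
    have h2 : ContinuousAt (fun δ : ℝ => δ / (lammin - δ)) 0 :=
      continuousAt_id.div h1 hne
    have h3 : ContinuousAt (fun δ : ℝ => (1 + δ / (lammin - δ)) ^ 2 / (2 * lammin)) 0 :=
      ((continuousAt_const.add h2).pow 2).div_const _
    have h4 : ContinuousAt (fun δ : ℝ => δ / (lammin - δ) ^ 2) 0 :=
      continuousAt_id.div (h1.pow 2) (pow_ne_zero 2 hne)
    exact h3.add h4
  have hc0 : c 0 < 1 / (2 * lammin) + ε := by
    simp only [hcdef]
    rw [zero_div, add_zero, zero_div, add_zero, one_pow]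
    linarith
  have hev1 : ∀ᶠ δ in nhds (0:ℝ), c δ < 1 / (2 * lammin) + ε :=
    hcont.eventually (eventually_lt_nhds hc0)
  have hev2 : ∀ᶠ δ in nhds (0:ℝ), δ < lammin / 2 :=
    eventually_lt_nhds (by linarith)
  have hev3 : ∀ᶠ δ in nhdsWithin (0:ℝ) (Set.Ioi 0),
      (c δ < 1 / (2 * lammin) + ε ∧ δ < lammin / 2) ∧ δ ∈ Set.Ioi (0:ℝ) :=
    (((hev1.and hev2)).filter_mono nhdsWithin_le_nhds).and self_mem_nhdsWithin
  obtain ⟨δ, ⟨hδc, hδhalf⟩, hδpos⟩ := hev3.exists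
  have hδpos : (0:ℝ) < δ := hδpos
  -- neighborhood where ‖fderiv g - H‖ < δ
  have htend : Filter.Tendsto (fderiv ℝ g) (nhds 0) (nhds H) :=
    (hgC1.continuous_fderiv one_ne_zero).continuousAt
  obtain ⟨r, hr, hball⟩ := Metric.mem_nhds_iff.mp (htend (Metric.ball_mem_nhds H hδpos))
  have hbound : ∀ y ∈ Metric.ball (0:E) r, ‖fderiv ℝ g y - H‖ ≤ δ := by
    intro y hy
    have h := Metric.mem_ball.mp (Set.mem_preimage.mp (hball hy))
    rw [dist_eq_norm] at h
    exact h.le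
  -- mean value: ‖g y - H y‖ ≤ δ‖y‖ on the ball
  have hmv : ∀ y ∈ Metric.ball (0:E) r, ‖g y - H y‖ ≤ δ * ‖y‖ := by
    intro y hy
    have := Convex.norm_image_sub_le_of_norm_hasFDerivWithin_le'
      (fun z hz => ((hgdiff z).hasFDerivAt.hasFDerivWithinAt :
        HasFDerivWithinAt g (fderiv ℝ g z) (Metric.ball (0:E) r) z))
      hbound (convex_ball 0 r) (Metric.mem_ball_self hr) hy
    simpa [hcrit, sub_zero] using this
  refine ⟨Metric.ball (0:E) r, Metric.ball_mem_nhds _ hr, ?_⟩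
  intro x hx hxne
  have hn : 0 < ‖x‖ := norm_pos_iff.mpr hxne
  have hxr : ‖x‖ < r := by simpa [Metric.mem_ball, dist_eq_norm] using hx
  -- Taylor-type estimate: |f x - f 0 - ⟪H x, x⟫/2| ≤ δ‖x‖²
  have htaylor : |f x - f 0 - ⟪H x, x⟫ / 2| ≤ δ * ‖x‖ ^ 2 := by
    set ψ : ℝ → ℝ := fun t => f (t • x) - t ^ 2 / 2 * ⟪H x, x⟫ with hψdef
    have hderiv : ∀ t : ℝ, HasDerivAt ψ (⟪g (t • x) - H (t • x), x⟫) t := by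
      intro t
      have h1 : HasDerivAt (fun t : ℝ => f (t • x)) (fderiv ℝ f (t • x) x) t := by
        have hsm : HasDerivAt (fun t : ℝ => t • x) ((1:ℝ) • x) t :=
          (hasDerivAt_id t).smul_const x
        have := (hfdiff (t • x)).hasFDerivAt.comp_hasDerivAt t hsm
        simp only [one_smul] at this
        exact this
      have h2 : HasDerivAt (fun t : ℝ => t ^ 2 / 2 * ⟪H x, x⟫) (t * ⟪H x, x⟫) t := by
        have := ((hasDerivAt_pow 2 t).div_const 2).mul_const (⟪H x, x⟫)
        exact this.congr_deriv (by ring)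
      have h3 := h1.sub h2
      convert h3 using 1
      · rfl
      · rfl
      · rfl
      rw [hinner, map_smul, inner_sub_left, inner_smul_left]
      simp
    have hb : ∀ t ∈ Set.Ico (0:ℝ) 1, ‖⟪g (t • x) - H (t • x), x⟫‖ ≤ δ * ‖x‖ ^ 2 := by
      intro t ht
      have htx : t • x ∈ Metric.ball (0:E) r := by
        rw [Metric.mem_ball, dist_eq_norm, sub_zero, norm_smul, Real.norm_eq_abs,
          abs_of_nonneg ht.1]
        calc t * ‖x‖ ≤ 1 * ‖x‖ := by nlinarith [ht.2.le]
          _ < r := by simpa using hxr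
      have h1 : ‖g (t • x) - H (t • x)‖ ≤ δ * ‖t • x‖ := hmv _ htx
      have h2 : |⟪g (t • x) - H (t • x), x⟫| ≤ ‖g (t • x) - H (t • x)‖ * ‖x‖ :=
        abs_real_inner_le_norm _ _
      have h3 : ‖t • x‖ ≤ ‖x‖ := by
        rw [norm_smul, Real.norm_eq_abs, abs_of_nonneg ht.1]
        nlinarith [ht.2.le]
      have h4 : ‖g (t • x) - H (t • x)‖ ≤ δ * ‖x‖ :=
        h1.trans (mul_le_mul_of_nonneg_left h3 hδpos.le)
      rw [Real.norm_eq_abs]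
      calc |⟪g (t • x) - H (t • x), x⟫| ≤ ‖g (t • x) - H (t • x)‖ * ‖x‖ := h2
        _ ≤ (δ * ‖x‖) * ‖x‖ := mul_le_mul_of_nonneg_right h4 (norm_nonneg x)
        _ = δ * ‖x‖ ^ 2 := by ring
    have := norm_image_sub_le_of_norm_deriv_le_segment'
      (f := ψ) (f' := fun t => ⟪g (t • x) - H (t • x), x⟫)
      (fun t _ => (hderiv t).hasDerivWithinAt) hb 1 (Set.right_mem_Icc.mpr zero_le_one)
    have hψ1 : ψ 1 = f x - ⟪H x, x⟫ / 2 := by simp [hψdef]; ring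
    have hψ0 : ψ 0 = f 0 := by simp [hψdef]
    rw [hψ1, hψ0] at this
    have h6 : f x - f 0 - ⟪H x, x⟫ / 2 = f x - ⟪H x, x⟫ / 2 - f 0 := by ring
    rw [h6]
    simpa [Real.norm_eq_abs] using this
  -- key quantities
  have hgx : ‖g x - H x‖ ≤ δ * ‖x‖ := hmv x hx
  have hHx1 : lammin * ‖x‖ ≤ ‖H x‖ := hHnorm x
  have hHx2 : ‖H x‖ ≤ ‖g x‖ + δ * ‖x‖ := by
    have := norm_sub_norm_le (g x) (H x)
    have h := norm_sub_rev (g x) (H x)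
    calc ‖H x‖ = ‖g x - (g x - H x)‖ := by congr 1; abel
      _ ≤ ‖g x‖ + ‖g x - H x‖ := norm_sub_le _ _
      _ ≤ ‖g x‖ + δ * ‖x‖ := by linarith
  have hG : (lammin - δ) * ‖x‖ ≤ ‖g x‖ := by linarith
  have hQlow : lammin * ‖x‖ ^ 2 ≤ ⟪H x, x⟫ := hH x
  have hQhigh : ⟪H x, x⟫ ≤ ‖H x‖ * ‖x‖ := real_inner_le_norm _ _
  have habs := abs_le.mp htaylor
  constructor
  · -- positivity
    nlinarith [habs.1, hQlow,
      mul_pos (show (0:ℝ) < lammin / 2 - δ by linarith) (pow_pos hn 2)]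
  · -- upper bound
    set n := ‖x‖
    set G := ‖g x‖
    have ha : 0 < lammin - δ := by linarith
    have hGpos : 0 < G := lt_of_lt_of_le (by positivity) hG
    have hnle : n ≤ G / (lammin - δ) := (le_div_iff₀ ha).mpr (by linarith [hG])
    have hxn : n ≤ ‖H x‖ / lammin := (le_div_iff₀ hlam).mpr (by linarith)
    have step1 : f x - f 0 ≤ ‖H x‖ ^ 2 / (2 * lammin) + δ * n ^ 2 := by
      have h1 : f x - f 0 ≤ ⟪H x, x⟫ / 2 + δ * n ^ 2 := by linarith [habs.2]
      have h2 : ⟪H x, x⟫ ≤ ‖H x‖ ^ 2 / lammin := by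
        have : ‖H x‖ * n ≤ ‖H x‖ * (‖H x‖ / lammin) := by
          apply mul_le_mul_of_nonneg_left hxn (norm_nonneg _)
        calc ⟪H x, x⟫ ≤ ‖H x‖ * n := hQhigh
          _ ≤ ‖H x‖ * (‖H x‖ / lammin) := this
          _ = ‖H x‖ ^ 2 / lammin := by ring
      have heq : (‖H x‖ ^ 2 / lammin) / 2 = ‖H x‖ ^ 2 / (2 * lammin) := by ring
      linarith
    have step2 : ‖H x‖ ^ 2 / (2 * lammin) + δ * n ^ 2 ≤
        (G + δ * (G / (lammin - δ))) ^ 2 / (2 * lammin) + δ * (G / (lammin - δ)) ^ 2 := by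
      have hHxb : ‖H x‖ ≤ G + δ * (G / (lammin - δ)) := by
        have : δ * n ≤ δ * (G / (lammin - δ)) :=
          mul_le_mul_of_nonneg_left hnle hδpos.le
        linarith
      gcongr
      all_goals first
        | exact norm_nonneg _
        | exact hδpos.le
        | exact hHxb
        | exact hnle
    have step3 : (G + δ * (G / (lammin - δ))) ^ 2 / (2 * lammin) +
        δ * (G / (lammin - δ)) ^ 2 = c δ * G ^ 2 := by
      rw [hcdef]
      field_simp
    have step4 : c δ * G ^ 2 ≤ (1 / (2 * lammin) + ε) * G ^ 2 :=
      mul_le_mul_of_nonneg_right hδc.le (by positivity)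
    calc f x - f 0 ≤ ‖H x‖ ^ 2 / (2 * lammin) + δ * n ^ 2 := step1
      _ ≤ _ := step2
      _ = c δ * G ^ 2 := step3
      _ ≤ (1 / (2 * lammin) + ε) * G ^ 2 := step4
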